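/- Let $Y$ and $Z$ be independent nonnegative integrable random variables such that $\mathbb{P}[0 \leq Y \leq 1] = 1$. Then $\mathbb{E}[\max(Y + Z, 1)] \leq (1 - \mathbb{E}[Y]) \cdot \mathbb{E}[\max(Z, 1)] + \mathbb{E}[Y] \cdot \mathbb{E}[\max(1 + Z, 1)]$. In other words, among all distributions of $Y$ supported in $[0,1]$ with given mean $\mu = \mathbb{E}[Y]$, the expectation $\mathbb{E}[\max(Y+Z,1)]$ is maximized by the two-point (Bernoulli) distribution taking value $1$ with probability $\mu$ and $0$ with probability $1-\mu$. -/

import Mathlib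

open MeasureTheory ProbabilityTheory

theorem stmt_5 {Ω : Type*} [MeasurableSpace Ω] (μ : Measure Ω) [IsProbabilityMeasure μ]
    (Y Z : Ω → ℝ) (hindep : IndepFun Y Z μ)
    (hYint : Integrable Y μ) (hZint : Integrable Z μ)
    (hY01 : ∀ᵐ ω ∂μ, 0 ≤ Y ω ∧ Y ω ≤ 1) (hZ0 : ∀ᵐ ω ∂μ, 0 ≤ Z ω) :
    ∫ ω, max (Y ω + Z ω) 1 ∂μ ≤
      (1 - ∫ ω, Y ω ∂μ) * ∫ ω, max (Z ω) 1 ∂μ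
        + (∫ ω, Y ω ∂μ) * ∫ ω, max (1 + Z ω) 1 ∂μ := by
  have hi1 : Integrable (fun ω => 1 - Y ω) μ := (integrable_const 1).sub hYint
  have hi2 : Integrable (fun ω => max (Z ω) 1) μ := by
    exact hZint.sup (integrable_const (1 : ℝ))
  have hi3 : Integrable (fun ω => max (1 + Z ω) 1) μ := by
    exact ((integrable_const (1:ℝ)).add hZint).sup (integrable_const (1 : ℝ))
  have hiL : Integrable (fun ω => max (Y ω + Z ω) 1) μ := by
    exact (hYint.add hZint).sup (integrable_const (1 : ℝ))
  have hb1 : ∀ᵐ ω ∂μ, ‖1 - Y ω‖ ≤ 1 := by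
    filter_upwards [hY01] with ω h
    rw [Real.norm_eq_abs, abs_le]; constructor <;> linarith [h.1, h.2]
  have hb2 : ∀ᵐ ω ∂μ, ‖Y ω‖ ≤ 1 := by
    filter_upwards [hY01] with ω h
    rw [Real.norm_eq_abs, abs_le]; constructor <;> linarith [h.1, h.2]
  have hip1 : Integrable (fun ω => (1 - Y ω) * max (Z ω) 1) μ :=
    hi2.bdd_mul hi1.aestronglyMeasurable hb1
  have hip2 : Integrable (fun ω => Y ω * max (1 + Z ω) 1) μ :=
    hi3.bdd_mul hYint.aestronglyMeasurable hb2
  have hind1 : IndepFun (fun ω => 1 - Y ω) (fun ω => max (Z ω) 1) μ :=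
    hindep.comp (measurable_const.sub measurable_id) (measurable_id.max measurable_const)
  have hind2 : IndepFun Y (fun ω => max (1 + Z ω) 1) μ :=
    hindep.comp measurable_id ((measurable_const.add measurable_id).max measurable_const)
  have e1 : ∫ ω, (1 - Y ω) * max (Z ω) 1 ∂μ
      = (∫ ω, (1 - Y ω) ∂μ) * ∫ ω, max (Z ω) 1 ∂μ :=
    hind1.integral_mul_eq_mul_integral hi1.aestronglyMeasurable hi2.aestronglyMeasurable
  have e2 : ∫ ω, Y ω * max (1 + Z ω) 1 ∂μ
      = (∫ ω, Y ω ∂μ) * ∫ ω, max (1 + Z ω) 1 ∂μ :=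
    hind2.integral_mul_eq_mul_integral hYint.aestronglyMeasurable hi3.aestronglyMeasurable
  have key : ∫ ω, max (Y ω + Z ω) 1 ∂μ
      ≤ ∫ ω, ((1 - Y ω) * max (Z ω) 1 + Y ω * max (1 + Z ω) 1) ∂μ := by
    refine integral_mono_ae hiL (hip1.add hip2) ?_
    filter_upwards [hY01, hZ0] with ω hY hZ
    obtain ⟨hy0, hy1⟩ := hY
    have hm2 : max (1 + Z ω) 1 = 1 + Z ω := max_eq_left (by linarith)
    have h1 : Z ω ≤ max (Z ω) 1 := le_max_left _ _
    have h2 : (1:ℝ) ≤ max (Z ω) 1 := le_max_right _ _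
    rw [hm2]
    apply max_le
    · nlinarith
    · nlinarith
  calc ∫ ω, max (Y ω + Z ω) 1 ∂μ
      ≤ ∫ ω, ((1 - Y ω) * max (Z ω) 1 + Y ω * max (1 + Z ω) 1) ∂μ := key
    _ = (∫ ω, (1 - Y ω) ∂μ) * ∫ ω, max (Z ω) 1 ∂μ
        + (∫ ω, Y ω ∂μ) * ∫ ω, max (1 + Z ω) 1 ∂μ := by
        rw [integral_add hip1 hip2, e1, e2]
    _ = (1 - ∫ ω, Y ω ∂μ) * ∫ ω, max (Z ω) 1 ∂μ
        + (∫ ω, Y ω ∂μ) * ∫ ω, max (1 + Z ω) 1 ∂μ := by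
        rw [integral_sub (integrable_const 1) hYint, integral_const]
        simp
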